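/- Let n > 1 and let a₀,…,aₙ, b₀,…,bₙ be strictly positive reals satisfying a_l/b_l < a_n/b_n, a_l < a_n, and b_l < b_n for all 0 ≤ l ≤ n−1. Let c₀,…,cₙ and c'₀,…,c'ₙ be nonnegative reals with c_l ≥ c'_l for all 0 ≤ l ≤ n−1, c_n < c'_n, and Σ_{l} c_l = Σ_{l} c'_l > 0. Then (Σ_l c_l a_l)/(Σ_l c_l b_l) < (Σ_l c'_l a_l)/(Σ_l c'_l b_l). -/
import Mathlib


/-- Weighted mediant comparison: shifting weight to the last (dominant) index strictly
increases the ratio of weighted sums. -/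
theorem stmt3 {n : ℕ} (hn : 1 < n) (a b c c' : Fin (n + 1) → ℝ)
    (ha : ∀ l, 0 < a l) (hb : ∀ l, 0 < b l)
    (hab : ∀ l : Fin (n + 1), l ≠ Fin.last n →
      a l / b l < a (Fin.last n) / b (Fin.last n))
    (haN : ∀ l : Fin (n + 1), l ≠ Fin.last n → a l < a (Fin.last n))
    (hbN : ∀ l : Fin (n + 1), l ≠ Fin.last n → b l < b (Fin.last n))
    (hc : ∀ l, 0 ≤ c l) (hc' : ∀ l, 0 ≤ c' l)
    (hcc' : ∀ l : Fin (n + 1), l ≠ Fin.last n → c' l ≤ c l)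
    (hcn : c (Fin.last n) < c' (Fin.last n))
    (hsum : ∑ l, c l = ∑ l, c' l) (hpos : 0 < ∑ l, c l) :
    (∑ l, c l * a l) / (∑ l, c l * b l) <
      (∑ l, c' l * a l) / (∑ l, c' l * b l) := by
  set N := Fin.last n with hNdef
  set A := ∑ l, c l * a l with hA
  set B := ∑ l, c l * b l with hB
  set A' := ∑ l, c' l * a l with hA'
  set B' := ∑ l, c' l * b l with hB'
  -- some c is positive
  obtain ⟨k, hk⟩ : ∃ k, 0 < c k := by
    by_contra h
    push_neg at h
    have := Finset.sum_nonpos (fun i (_ : i ∈ Finset.univ) => h i)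
    linarith
  have hB0 : 0 < B := by
    rw [hB]
    exact Finset.sum_pos' (fun l _ => mul_nonneg (hc l) (hb l).le)
      ⟨k, Finset.mem_univ k, mul_pos hk (hb k)⟩
  have hc'N : 0 < c' N := lt_of_le_of_lt (hc N) hcn
  have hB'0 : 0 < B' := by
    rw [hB']
    exact Finset.sum_pos' (fun l _ => mul_nonneg (hc' l) (hb l).le)
      ⟨N, Finset.mem_univ N, mul_pos hc'N (hb N)⟩
  rw [div_lt_div_iff₀ hB0 hB'0]
  -- key linear algebra identity
  have hdiff : A' * B - A * B' = ∑ l, (c l - c' l) * (A * b l - B * a l) := by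
    have h1 : ∑ l, (c l - c' l) * (A * b l - B * a l)
        = A * B - B * A - (A * B' - B * A') := by
      rw [hA, hB, hA', hB']
      simp only [Finset.mul_sum]
      rw [← Finset.sum_sub_distrib, ← Finset.sum_sub_distrib, ← Finset.sum_sub_distrib]
      exact Finset.sum_congr rfl fun l _ => by ring
    rw [h1]; ring
  -- the ratio A/B is at most a_N/b_N (mediant property)
  have hmed : A * b N ≤ B * a N := by
    rw [hA, hB, Finset.sum_mul, Finset.sum_mul]
    apply Finset.sum_le_sum
    intro l _
    rcases eq_or_ne l N with rfl | h
    · exact le_of_eq (by ring)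
    · have h1 : a l * b N < a N * b l := (div_lt_div_iff₀ (hb l) (hb N)).mp (hab l h)
      nlinarith [mul_le_mul_of_nonneg_left h1.le (hc l)]
  -- positivity of the per-index factor
  have hfac : ∀ l : Fin (n + 1), l ≠ N →
      0 < (A * b l - B * a l) - (A * b N - B * a N) := by
    intro l hl
    have h1 : a l * b N < a N * b l := (div_lt_div_iff₀ (hb l) (hb N)).mp (hab l hl)
    have h2 : b l < b N := hbN l hl
    have hbNpos := hb N
    nlinarith [mul_le_mul_of_nonneg_right hmed (sub_pos.mpr h2).le,
      mul_pos hB0 (sub_pos.mpr h1)]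
  -- weight differences over the first n indices
  have hcast := Fin.sum_univ_castSucc (f := c)
  have hcast' := Fin.sum_univ_castSucc (f := c')
  have hdN : c N - c' N = -∑ i : Fin n, (c i.castSucc - c' i.castSucc) := by
    rw [Finset.sum_sub_distrib]
    rw [hcast, hcast'] at hsum
    simp only [← hNdef] at hsum
    linarith
  have hsplit : ∑ l, (c l - c' l) * (A * b l - B * a l)
      = ∑ i : Fin n, (c i.castSucc - c' i.castSucc) *
          ((A * b i.castSucc - B * a i.castSucc) - (A * b N - B * a N)) := by
    rw [Fin.sum_univ_castSucc
      (f := fun l => (c l - c' l) * (A * b l - B * a l))]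
    simp only [← hNdef]
    rw [hdN]
    simp only [mul_sub, sub_mul, neg_mul, Finset.sum_sub_distrib, Finset.sum_mul]
    ring
  have hdsum : 0 < ∑ i : Fin n, (c i.castSucc - c' i.castSucc) := by
    have := hdN
    linarith
  obtain ⟨j, hj⟩ : ∃ j : Fin n, 0 < c j.castSucc - c' j.castSucc := by
    by_contra h
    push_neg at h
    have := Finset.sum_nonpos (fun i (_ : i ∈ Finset.univ) => h i)
    linarith
  have hTpos : 0 < ∑ l, (c l - c' l) * (A * b l - B * a l) := by
    rw [hsplit]
    refine Finset.sum_pos' (fun i _ => ?_) ⟨j, Finset.mem_univ j, ?_⟩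
    · exact mul_nonneg
        (sub_nonneg.mpr (hcc' _ (Fin.castSucc_lt_last i).ne))
        (hfac _ (Fin.castSucc_lt_last i).ne).le
    · exact mul_pos hj (hfac _ (Fin.castSucc_lt_last j).ne)
  linarith
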